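/- Let E and F be finite-dimensional complex vector spaces with dim E ≥ 2 and dim F ≥ 2, and let γ_E and γ_F be nondegenerate symmetric bilinear forms on E and F respectively. Let Φ : (E ⊗ F)⁴ → ℂ be the 4-multilinear map determined on decomposable elements by Φ(e₁⊗f₁, e₂⊗f₂, e₃⊗f₃, e₄⊗f₄) = γ_E(e₁,e₂)·γ_E(e₃,e₄)·γ_F(f₁,f₃)·γ_F(f₂,f₄), and define the 4-form Ω on E ⊗ F as its alternation, Ω(x₁,x₂,x₃,x₄) := Σ_{σ ∈ S₄} sgn(σ)·Φ(x_{σ(1)}, x_{σ(2)}, x_{σ(3)}, x_{σ(4)}). Then Ω is a nonzero alternating 4-linear form on E ⊗ F, invariant under all automorphisms of the form a ⊗ b with a preserving γ_E and b preserving γ_F. -/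

import Mathlib

open TensorProduct

private lemma sumPerm4' {M : Type*} [AddCommMonoid M] (f : Equiv.Perm (Fin 4) → M) :
    ∑ σ : Equiv.Perm (Fin 4), f σ
      = ∑ p : Fin 4, ∑ e : Equiv.Perm (Fin 3), f (Equiv.Perm.decomposeFin.symm (p, e)) := by
  rw [← Equiv.sum_comp (Equiv.Perm.decomposeFin.symm : Fin 4 × Equiv.Perm (Fin 3) ≃ _),
    Fintype.sum_prod_type]

private lemma sumPerm3' {M : Type*} [AddCommMonoid M] (f : Equiv.Perm (Fin 3) → M) :
    ∑ σ : Equiv.Perm (Fin 3), f σ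
      = ∑ p : Fin 3, ∑ e : Equiv.Perm (Fin 2), f (Equiv.Perm.decomposeFin.symm (p, e)) := by
  rw [← Equiv.sum_comp (Equiv.Perm.decomposeFin.symm : Fin 3 × Equiv.Perm (Fin 2) ≃ _),
    Fintype.sum_prod_type]

private lemma sumPerm2' {M : Type*} [AddCommMonoid M] (f : Equiv.Perm (Fin 2) → M) :
    ∑ σ : Equiv.Perm (Fin 2), f σ
      = ∑ p : Fin 2, ∑ e : Equiv.Perm (Fin 1), f (Equiv.Perm.decomposeFin.symm (p, e)) := by
  rw [← Equiv.sum_comp (Equiv.Perm.decomposeFin.symm : Fin 2 × Equiv.Perm (Fin 1) ≃ _),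
    Fintype.sum_prod_type]

private lemma permFin1_default' : (default : Equiv.Perm (Fin 1)) = 1 := rfl

private lemma dec4_two' (p : Fin 4) (e : Equiv.Perm (Fin 3)) :
    Equiv.Perm.decomposeFin.symm (p, e) 2 = Equiv.swap 0 p (e 1).succ := by
  rw [show (2 : Fin 4) = Fin.succ 1 from rfl, Equiv.Perm.decomposeFin_symm_apply_succ]

private lemma dec4_three' (p : Fin 4) (e : Equiv.Perm (Fin 3)) :
    Equiv.Perm.decomposeFin.symm (p, e) 3 = Equiv.swap 0 p (e 2).succ := by
  rw [show (3 : Fin 4) = Fin.succ 2 from rfl, Equiv.Perm.decomposeFin_symm_apply_succ]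

private lemma dec3_two' (p : Fin 3) (e : Equiv.Perm (Fin 2)) :
    Equiv.Perm.decomposeFin.symm (p, e) 2 = Equiv.swap 0 p (e 1).succ := by
  rw [show (2 : Fin 3) = Fin.succ 1 from rfl, Equiv.Perm.decomposeFin_symm_apply_succ]

/-- Expansion of an alternating sum over `Perm (Fin 4)` into its 24 terms. -/
private lemma perm4_expand (g : Fin 4 → Fin 4 → Fin 4 → Fin 4 → ℂ) :
    ∑ σ : Equiv.Perm (Fin 4), ((Equiv.Perm.sign σ : ℤ) : ℂ) * g (σ 0) (σ 1) (σ 2) (σ 3)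
    = g 0 1 2 3 - g 0 1 3 2 - g 0 2 1 3 + g 0 2 3 1 + g 0 3 1 2 - g 0 3 2 1
    - g 1 0 2 3 + g 1 0 3 2 + g 1 2 0 3 - g 1 2 3 0 - g 1 3 0 2 + g 1 3 2 0
    + g 2 0 1 3 - g 2 0 3 1 - g 2 1 0 3 + g 2 1 3 0 + g 2 3 0 1 - g 2 3 1 0
    - g 3 0 1 2 + g 3 0 2 1 + g 3 1 0 2 - g 3 1 2 0 - g 3 2 0 1 + g 3 2 1 0 := by
  rw [sumPerm4']
  simp only [sumPerm3', sumPerm2', Fintype.sum_unique, permFin1_default']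
  simp only [Fin.sum_univ_four, Fin.sum_univ_three, Fin.sum_univ_two]
  simp only [Equiv.Perm.decomposeFin.symm_sign, Equiv.Perm.decomposeFin_symm_apply_zero,
    Equiv.Perm.decomposeFin_symm_apply_one, dec4_two', dec4_three', dec3_two',
    Equiv.Perm.decomposeFin_symm_of_one]
  simp [Equiv.swap_apply_def, Equiv.Perm.sign_swap, show Fin.succ (2 : Fin 3) = 3 from rfl]
  ring

/-- The even-spin analogue of Theorem 5.7 of the paper: for finite-dimensional
complex vector spaces `E`, `F` of dimension at least `2` with nondegenerate
symmetric bilinear forms `γ_E`, `γ_F`, the alternation `Ω` of the 4-multilinear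
map `Φ(e₁⊗f₁,…,e₄⊗f₄) = γ_E(e₁,e₂)γ_E(e₃,e₄)γ_F(f₁,f₃)γ_F(f₂,f₄)` is a nonzero
alternating 4-form on `E ⊗ F` invariant under automorphisms `a ⊗ b` with `a`
preserving `γ_E` and `b` preserving `γ_F`. -/
theorem even_spin_invariant_four_form
    (E F : Type*) [AddCommGroup E] [Module ℂ E] [AddCommGroup F] [Module ℂ F]
    [FiniteDimensional ℂ E] [FiniteDimensional ℂ F]
    (hdimE : 2 ≤ Module.finrank ℂ E) (hdimF : 2 ≤ Module.finrank ℂ F)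
    (γE : E →ₗ[ℂ] E →ₗ[ℂ] ℂ) (γF : F →ₗ[ℂ] F →ₗ[ℂ] ℂ)
    (hγE_symm : ∀ e e' : E, γE e e' = γE e' e)
    (hγE_nd : ∀ e : E, (∀ e' : E, γE e e' = 0) → e = 0)
    (hγF_symm : ∀ f f' : F, γF f f' = γF f' f)
    (hγF_nd : ∀ f : F, (∀ f' : F, γF f f' = 0) → f = 0)
    (Φ : E ⊗[ℂ] F →ₗ[ℂ] E ⊗[ℂ] F →ₗ[ℂ] E ⊗[ℂ] F →ₗ[ℂ] E ⊗[ℂ] F →ₗ[ℂ] ℂ)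
    (hΦ : ∀ (e₁ e₂ e₃ e₄ : E) (f₁ f₂ f₃ f₄ : F),
      Φ (e₁ ⊗ₜ[ℂ] f₁) (e₂ ⊗ₜ[ℂ] f₂) (e₃ ⊗ₜ[ℂ] f₃) (e₄ ⊗ₜ[ℂ] f₄)
        = γE e₁ e₂ * γE e₃ e₄ * γF f₁ f₃ * γF f₂ f₄)
    (Ω : (Fin 4 → E ⊗[ℂ] F) → ℂ)
    (hΩ : ∀ v : Fin 4 → E ⊗[ℂ] F,
      Ω v = ∑ σ : Equiv.Perm (Fin 4),
        ((Equiv.Perm.sign σ : ℤ) : ℂ) * Φ (v (σ 0)) (v (σ 1)) (v (σ 2)) (v (σ 3))) :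
    -- Ω is nonzero
    (∃ v : Fin 4 → E ⊗[ℂ] F, Ω v ≠ 0) ∧
    -- Ω is alternating
    (∀ (v : Fin 4 → E ⊗[ℂ] F) (i j : Fin 4), i ≠ j → v i = v j → Ω v = 0) ∧
    -- Ω is invariant under automorphisms `a ⊗ b` preserving the forms
    (∀ (a : E ≃ₗ[ℂ] E) (b : F ≃ₗ[ℂ] F),
      (∀ e e' : E, γE (a e) (a e') = γE e e') →
      (∀ f f' : F, γF (b f) (b f') = γF f f') →
      ∀ v : Fin 4 → E ⊗[ℂ] F,
        Ω (fun i => TensorProduct.map a.toLinearMap b.toLinearMap (v i)) = Ω v) := by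
  refine ⟨?_, ?_, ?_⟩
  · -- nonzero
    haveI : Invertible (2 : ℂ) := invertibleOfNonzero two_ne_zero
    obtain ⟨bE, hbE⟩ := LinearMap.BilinForm.exists_orthogonal_basis
      (B := γE) (LinearMap.isSymm_def.mpr fun x y => hγE_symm x y)
    obtain ⟨bF, hbF⟩ := LinearMap.BilinForm.exists_orthogonal_basis
      (B := γF) (LinearMap.isSymm_def.mpr fun x y => hγF_symm x y)
    have hdiagE : ∀ i, γE (bE i) (bE i) ≠ 0 := by
      intro i h
      refine bE.ne_zero i (hγE_nd _ ?_)
      intro e'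
      have h0 : γE (bE i) = 0 := by
        apply bE.ext
        intro j
        rcases eq_or_ne j i with rfl | hj
        · simpa using h
        · simpa using LinearMap.isOrthoᵢ_def.mp hbE i j hj.symm
      simp [h0]
    have hdiagF : ∀ i, γF (bF i) (bF i) ≠ 0 := by
      intro i h
      refine bF.ne_zero i (hγF_nd _ ?_)
      intro f'
      have h0 : γF (bF i) = 0 := by
        apply bF.ext
        intro j
        rcases eq_or_ne j i with rfl | hj
        · simpa using h
        · simpa using LinearMap.isOrthoᵢ_def.mp hbF i j hj.symm
      simp [h0]
    set e₁ : E := bE ⟨0, by omega⟩ with he₁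
    set e₂ : E := bE ⟨1, by omega⟩ with he₂
    set f₁ : F := bF ⟨0, by omega⟩ with hf₁
    set f₂ : F := bF ⟨1, by omega⟩ with hf₂
    have hE12 : γE e₁ e₂ = 0 :=
      LinearMap.isOrthoᵢ_def.mp hbE _ _ (by simp [Fin.ext_iff])
    have hE21 : γE e₂ e₁ = 0 :=
      LinearMap.isOrthoᵢ_def.mp hbE _ _ (by simp [Fin.ext_iff])
    have hF12 : γF f₁ f₂ = 0 :=
      LinearMap.isOrthoᵢ_def.mp hbF _ _ (by simp [Fin.ext_iff])
    have hF21 : γF f₂ f₁ = 0 :=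
      LinearMap.isOrthoᵢ_def.mp hbF _ _ (by simp [Fin.ext_iff])
    set v : Fin 4 → E ⊗[ℂ] F :=
      ![e₁ ⊗ₜ[ℂ] f₁, e₁ ⊗ₜ[ℂ] f₂, e₂ ⊗ₜ[ℂ] f₁, e₂ ⊗ₜ[ℂ] f₂] with hv
    refine ⟨v, ?_⟩
    have hv0 : v 0 = e₁ ⊗ₜ[ℂ] f₁ := rfl
    have hv1 : v 1 = e₁ ⊗ₜ[ℂ] f₂ := rfl
    have hv2 : v 2 = e₂ ⊗ₜ[ℂ] f₁ := rfl
    have hv3 : v 3 = e₂ ⊗ₜ[ℂ] f₂ := rfl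
    have hval : Ω v
        = 4 * (γE e₁ e₁ * γE e₂ e₂ * γF f₁ f₁ * γF f₂ f₂) := by
      rw [hΩ v, perm4_expand (fun i j k l => Φ (v i) (v j) (v k) (v l))]
      simp only [hv0, hv1, hv2, hv3, hΦ, hE12, hE21, hF12, hF21,
        zero_mul, mul_zero]
      ring
    rw [hval]
    exact mul_ne_zero (by norm_num)
      (mul_ne_zero (mul_ne_zero (mul_ne_zero (hdiagE _) (hdiagE _)) (hdiagF _)) (hdiagF _))
  · -- alternating
    intro v i j hij hv
    rw [hΩ v]
    set f : Equiv.Perm (Fin 4) → ℂ := fun σ =>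
      ((Equiv.Perm.sign σ : ℤ) : ℂ) * Φ (v (σ 0)) (v (σ 1)) (v (σ 2)) (v (σ 3)) with hf
    have hvs : ∀ k, v (Equiv.swap i j k) = v k := by
      intro k
      rcases eq_or_ne k i with rfl | hki
      · rw [Equiv.swap_apply_left, hv]
      rcases eq_or_ne k j with rfl | hkj
      · rw [Equiv.swap_apply_right, hv]
      · rw [Equiv.swap_apply_of_ne_of_ne hki hkj]
    have h1 : ∑ σ : Equiv.Perm (Fin 4), f σ = ∑ σ : Equiv.Perm (Fin 4), f (Equiv.swap i j * σ) :=
      (Equiv.sum_comp (Equiv.mulLeft (Equiv.swap i j)) f).symm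
    have h2 : ∀ σ : Equiv.Perm (Fin 4), f (Equiv.swap i j * σ) = - f σ := by
      intro σ
      simp only [hf, Equiv.Perm.mul_apply, hvs, Equiv.Perm.sign_mul,
        Equiv.Perm.sign_swap hij, Units.val_mul, Units.val_neg, Units.val_one,
        Int.cast_neg, Int.cast_mul, Int.cast_one, neg_mul, one_mul]
    have h3 : (2 : ℂ) * ∑ σ : Equiv.Perm (Fin 4), f σ = 0 := by
      rw [two_mul]
      nth_rewrite 2 [h1]
      simp only [h2, Finset.sum_neg_distrib]
      ring
    have := (mul_eq_zero.mp h3).resolve_left two_ne_zero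
    exact this
  · -- invariance
    intro a b ha hb v
    set m : E ⊗[ℂ] F →ₗ[ℂ] E ⊗[ℂ] F :=
      TensorProduct.map a.toLinearMap b.toLinearMap with hm
    have key : ∀ x y z w : E ⊗[ℂ] F, Φ (m x) (m y) (m z) (m w) = Φ x y z w := by
      intro x y z w
      induction x using TensorProduct.induction_on with
      | zero => simp
      | add x₁ x₂ hx₁ hx₂ => simp only [map_add, LinearMap.add_apply, hx₁, hx₂]
      | tmul e₁ f₁ =>
        induction y using TensorProduct.induction_on with
        | zero => simp
        | add y₁ y₂ hy₁ hy₂ => simp only [map_add, LinearMap.add_apply, hy₁, hy₂]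
        | tmul e₂ f₂ =>
          induction z using TensorProduct.induction_on with
          | zero => simp
          | add z₁ z₂ hz₁ hz₂ => simp only [map_add, LinearMap.add_apply, hz₁, hz₂]
          | tmul e₃ f₃ =>
            induction w using TensorProduct.induction_on with
            | zero => simp
            | add w₁ w₂ hw₁ hw₂ => simp only [map_add, LinearMap.add_apply, hw₁, hw₂]
            | tmul e₄ f₄ =>
              simp only [hm, TensorProduct.map_tmul, LinearEquiv.coe_coe, hΦ, ha, hb]
    rw [hΩ, hΩ]
    exact Finset.sum_congr rfl fun σ _ => by rw [key]
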